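/- For every real λ > 0, every real t ≥ 0, and every x ∈ ℤ^d, the discrete heat kernel satisfies ∑_{y ∈ ℤ^d} p_t(x,y) e^{λ|y|} ≤ exp(2dt(e^λ − 1)) · e^{λ|x|} (in particular the sum on the left is finite). -/

import Mathlib

noncomputable section

open scoped ENNReal BigOperators

namespace Paper

variable {α : Type*}

/-- The real Hilbert space `ℓ²` over the index set `α`. -/
abbrev L2 (α : Type*) := lp (fun _ : α => ℝ) 2

lemma memℓp_comp (e : α ≃ α) (f : L2 α) : Memℓp (fun x => f (e x)) (2 : ℝ≥0∞) := by
  have h2 : (0:ℝ) < (2 : ℝ≥0∞).toReal := by norm_num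
  rw [memℓp_gen_iff h2]
  have hf := lp.memℓp f
  rw [memℓp_gen_iff h2] at hf
  exact (e.summable_iff (f := fun i => ‖f i‖ ^ (2 : ℝ≥0∞).toReal)).2 hf

/-- Reindexing along an equivalence of the index set, as a bounded operator on `ℓ²`. -/
def shiftCLM (e : α ≃ α) : L2 α →L[ℝ] L2 α :=
  LinearMap.mkContinuous
    { toFun := fun f => ⟨fun x => f (e x), memℓp_comp e f⟩
      map_add' := by
        intro f g; apply lp.ext; funext x; simp [lp.coeFn_add]; rfl
      map_smul' := by
        intro c f; apply lp.ext; funext x; simp [lp.coeFn_smul] }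
    1
    (by
      intro f
      rw [one_mul]
      have h2 : (0:ℝ) < (2 : ℝ≥0∞).toReal := by norm_num
      have key : ∀ g : L2 α, ‖g‖ = (∑' i, ‖g i‖ ^ (2 : ℝ≥0∞).toReal) ^ ((2 : ℝ≥0∞).toReal)⁻¹ := by
        intro g
        rw [lp.norm_eq_tsum_rpow h2 g, one_div]
      rw [key, key]
      refine le_of_eq (congrArg (· ^ ((2 : ℝ≥0∞).toReal)⁻¹) ?_)
      exact e.tsum_eq (f := fun i => ‖f i‖ ^ (2 : ℝ≥0∞).toReal))

@[simp] lemma shiftCLM_apply (e : α ≃ α) (f : L2 α) (x : α) :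
    shiftCLM e f x = f (e x) := rfl

/-- The discrete Laplacian on `ℤ^d`, as a bounded operator on `ℓ²(ℤ^d)`:
`(Δ f)(x) = ∑_{y ∈ N(x)} f(y) - 2d f(x)`, where the set `N(x)` of nearest neighbors of
`x` (points of `ℤ^d` at Euclidean distance 1 from `x`) consists of the `2d` points
`x ± eᵢ`, `1 ≤ i ≤ d`. -/
def discreteLaplacian (d : ℕ) : L2 (Fin d → ℤ) →L[ℝ] L2 (Fin d → ℤ) :=
  (∑ i : Fin d,
      (shiftCLM (Equiv.addRight (Pi.single i 1 : Fin d → ℤ)) +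
       shiftCLM (Equiv.addRight (-Pi.single i 1 : Fin d → ℤ))))
  - (2 * (d : ℝ)) • ContinuousLinearMap.id ℝ (L2 (Fin d → ℤ))

/-- The discrete heat kernel `p_t(x,y) := (exp(tΔ) δ_y)(x)` on `ℤ^d`, where `exp` is the
exponential of bounded operators and `δ_y ∈ ℓ²(ℤ^d)` is the indicator function of `y`. -/
def heatKernel (d : ℕ) (t : ℝ) (x y : Fin d → ℤ) : ℝ :=
  (NormedSpace.exp (t • discreteLaplacian d) (lp.single 2 y (1:ℝ))) x

/-- The generator of continuous-time simple symmetric random walk on `ℤ` with jump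
rate `lam`: `(Q_lam f)(x) = (lam/2)(f(x+1)+f(x-1)) - lam·f(x)`. -/
def walkGen (lam : ℝ) : L2 ℤ →L[ℝ] L2 ℤ :=
  (lam / 2) • (shiftCLM (Equiv.addRight (1:ℤ)) + shiftCLM (Equiv.addRight (-1:ℤ)))
    - lam • ContinuousLinearMap.id ℝ (L2 ℤ)

/-- `p_t^{(lam)}(x) := (exp(t Q_lam) δ_0)(x)`, the transition probability of the
rate-`lam` continuous-time simple symmetric random walk on `ℤ` started at `0`. -/
def walkKernel (lam : ℝ) (t : ℝ) (x : ℤ) : ℝ :=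
  (NormedSpace.exp (t • walkGen lam) (lp.single 2 (0:ℤ) (1:ℝ))) x

/-- `|x| = ∑ᵢ |xᵢ|` for `x ∈ ℤ^d`. -/
def l1norm {d : ℕ} (x : Fin d → ℤ) : ℕ := ∑ i, (x i).natAbs

end Paper

open Paper


namespace HK

open Paper NormedSpace

variable {d : ℕ}

set_option maxHeartbeats 1000000
set_option synthInstance.maxHeartbeats 400000

/-- The "jump part" of the Laplacian. -/
def A (d : ℕ) : L2 (Fin d → ℤ) →L[ℝ] L2 (Fin d → ℤ) :=
  ∑ i : Fin d,
      (shiftCLM (Equiv.addRight (Pi.single i 1 : Fin d → ℤ)) +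
       shiftCLM (Equiv.addRight (-Pi.single i 1 : Fin d → ℤ)))

lemma laplacian_eq (d : ℕ) :
    discreteLaplacian d = A d - (2 * (d : ℝ)) • (1 : L2 (Fin d → ℤ) →L[ℝ] L2 (Fin d → ℤ)) := rfl

lemma A_apply (f : L2 (Fin d → ℤ)) (x : Fin d → ℤ) :
    A d f x = ∑ i : Fin d, (f (x + Pi.single i 1) + f (x + -Pi.single i 1)) := by
  have h1 : A d f = ∑ i : Fin d,
      ((shiftCLM (Equiv.addRight (Pi.single i 1 : Fin d → ℤ)) +
        shiftCLM (Equiv.addRight (-Pi.single i 1 : Fin d → ℤ))) f) := by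
    rw [A, ContinuousLinearMap.sum_apply]
  calc A d f x = (∑ i : Fin d,
      ((shiftCLM (Equiv.addRight (Pi.single i 1 : Fin d → ℤ)) +
        shiftCLM (Equiv.addRight (-Pi.single i 1 : Fin d → ℤ))) f)) x := by rw [h1]
    _ = ∑ i : Fin d, (f (x + Pi.single i 1) + f (x + -Pi.single i 1)) := by
        rw [lp.coeFn_sum, Finset.sum_apply]
        refine Finset.sum_congr rfl fun i _ => ?_
        simp [lp.coeFn_add, Equiv.coe_addRight]

/-- evaluation at a point as a CLM. -/
def ev (x : Fin d → ℤ) : L2 (Fin d → ℤ) →L[ℝ] ℝ :=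
  LinearMap.mkContinuous
    { toFun := fun f => f x
      map_add' := by intro f g; simp [lp.coeFn_add]
      map_smul' := by intro c f; simp [lp.coeFn_smul] }
    1
    (fun f => by
      rw [one_mul]; exact lp.norm_apply_le_norm two_ne_zero f x)

@[simp] lemma ev_apply (x : Fin d → ℤ) (f : L2 (Fin d → ℤ)) : ev x f = f x := rfl

/-- matrix entries of powers of `A`. -/
def aK (d : ℕ) (n : ℕ) (x y : Fin d → ℤ) : ℝ := ((A d) ^ n) (lp.single 2 y (1:ℝ)) x

lemma aK_zero (x y : Fin d → ℤ) : aK d 0 x y = if x = y then 1 else 0 := by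
  simp [aK, lp.single_apply, Pi.single_apply]

lemma aK_succ (n : ℕ) (x y : Fin d → ℤ) :
    aK d (n+1) x y = ∑ i : Fin d, (aK d n (x + Pi.single i 1) y + aK d n (x + -Pi.single i 1) y) := by
  have : ((A d) ^ (n+1)) (lp.single 2 y (1:ℝ)) = (A d) (((A d) ^ n) (lp.single 2 y (1:ℝ))) := by
    rw [pow_succ', ContinuousLinearMap.mul_apply]
  rw [aK, this, A_apply]
  rfl

lemma aK_nonneg (n : ℕ) (x y : Fin d → ℤ) : 0 ≤ aK d n x y := by
  induction n generalizing x with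
  | zero => rw [aK_zero]; split <;> norm_num
  | succ n ih =>
    rw [aK_succ]
    exact Finset.sum_nonneg fun i _ => add_nonneg (ih _) (ih _)

lemma exp_smul_one (s : ℝ) :
    exp (s • (1 : L2 (Fin d → ℤ) →L[ℝ] L2 (Fin d → ℤ))) =
      Real.exp s • (1 : L2 (Fin d → ℤ) →L[ℝ] L2 (Fin d → ℤ)) := by
  have h := map_exp (algebraMap ℝ (L2 (Fin d → ℤ) →L[ℝ] L2 (Fin d → ℤ)))
    (continuous_algebraMap _ _) s
  rw [Real.exp_eq_exp_ℝ]
  rw [Algebra.algebraMap_eq_smul_one (R := ℝ), Algebra.algebraMap_eq_smul_one (R := ℝ)] at h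
  exact h.symm

lemma heat_eq (t : ℝ) (x y : Fin d → ℤ) :
    heatKernel d t x y =
      Real.exp (-(2 * d * t)) * ((exp (t • A d)) (lp.single 2 y (1:ℝ))) x := by
  have hsplit : t • discreteLaplacian d = t • A d + (-(2 * (d:ℝ) * t)) • 1 := by
    rw [laplacian_eq, smul_sub, smul_smul, sub_eq_add_neg, ← neg_smul]
    congr 1
    ring
  have hcomm : Commute (t • A d) ((-(2 * (d:ℝ) * t)) • (1 : L2 (Fin d → ℤ) →L[ℝ] L2 (Fin d → ℤ))) :=
    ((Commute.one_right (t • A d)).smul_right _)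
  have hexp : exp (t • discreteLaplacian d) =
      exp (t • A d) * (Real.exp (-(2 * (d:ℝ) * t)) • 1) := by
    letI : NormedAlgebra ℚ (L2 (Fin d → ℤ) →L[ℝ] L2 (Fin d → ℤ)) :=
      NormedAlgebra.restrictScalars ℚ ℝ _
    rw [hsplit, exp_add_of_commute hcomm, exp_smul_one]
  rw [heatKernel, hexp]
  rw [ContinuousLinearMap.mul_apply]
  simp only [ContinuousLinearMap.smul_apply, ContinuousLinearMap.one_apply, map_smul,
    lp.coeFn_smul, Pi.smul_apply, smul_eq_mul]

lemma heat_hasSum (t : ℝ) (x y : Fin d → ℤ) :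
    HasSum (fun n : ℕ => ((n.factorial : ℝ))⁻¹ * t ^ n * aK d n x y)
      (Real.exp (2 * d * t) * heatKernel d t x y) := by
  set L : (L2 (Fin d → ℤ) →L[ℝ] L2 (Fin d → ℤ)) →L[ℝ] ℝ :=
    (ev x).comp ((ContinuousLinearMap.apply ℝ (L2 (Fin d → ℤ))) (lp.single 2 y (1:ℝ))) with hL
  have h := (exp_series_hasSum_exp' (𝕂 := ℝ) (t • A d)).mapL L
  have h1 : ∀ n : ℕ, L (((n.factorial : ℝ))⁻¹ • (t • A d) ^ n) =
      ((n.factorial : ℝ))⁻¹ * t ^ n * aK d n x y := by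
    intro n
    rw [map_smul, smul_pow]
    simp only [hL, ContinuousLinearMap.comp_apply, ContinuousLinearMap.apply_apply,
      ContinuousLinearMap.smul_apply, ev_apply, lp.coeFn_smul, Pi.smul_apply, smul_eq_mul]
    rw [aK]
    ring
  have h2 : L (exp (t • A d)) = Real.exp (2 * d * t) * heatKernel d t x y := by
    simp only [hL, ContinuousLinearMap.comp_apply, ContinuousLinearMap.apply_apply, ev_apply]
    rw [heat_eq t x y, ← mul_assoc, ← Real.exp_add]
    ring_nf
    rw [Real.exp_zero, one_mul]
  rw [← h2]
  have hfun : (fun n : ℕ => L (((n.factorial : ℝ))⁻¹ • (t • A d) ^ n)) =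
      fun n : ℕ => ((n.factorial : ℝ))⁻¹ * t ^ n * aK d n x y := funext h1
  exact hfun ▸ h


lemma sum_natAbs_single (i : Fin d) (c : ℤ) :
    ∑ j : Fin d, ((Pi.single i c : Fin d → ℤ) j).natAbs = c.natAbs := by
  rw [Finset.sum_eq_single i]
  · simp
  · intro j _ hj; simp [Pi.single_eq_of_ne hj]
  · intro h; exact absurd (Finset.mem_univ i) h

lemma l1norm_add_single (x : Fin d → ℤ) (i : Fin d) (c : ℤ) :
    l1norm (x + Pi.single i c) ≤ l1norm x + c.natAbs := by
  calc l1norm (x + Pi.single i c)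
        = ∑ j, ((x j + (Pi.single i c : Fin d → ℤ) j).natAbs) := by
        rw [l1norm]; rfl
    _ ≤ ∑ j, ((x j).natAbs + ((Pi.single i c : Fin d → ℤ) j).natAbs) :=
        Finset.sum_le_sum fun j _ => Int.natAbs_add_le _ _
    _ = l1norm x + c.natAbs := by rw [Finset.sum_add_distrib, sum_natAbs_single]; rfl

/-- weight -/
def w (lam : ℝ) (y : Fin d → ℤ) : ℝ≥0∞ := ENNReal.ofReal (Real.exp (lam * (l1norm y : ℝ)))

lemma key (lam : ℝ) (hlam : 0 ≤ lam) (n : ℕ) (x : Fin d → ℤ) :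
    ∑' y : Fin d → ℤ, ENNReal.ofReal (aK d n x y) * w lam y
      ≤ ENNReal.ofReal ((2 * (d:ℝ)) ^ n * Real.exp (lam * ((l1norm x : ℝ) + n))) := by
  induction n generalizing x with
  | zero =>
    have hz : ∀ y : Fin d → ℤ, y ≠ x →
        ENNReal.ofReal (aK d 0 x y) * w lam y = 0 := by
      intro y hy
      rw [aK_zero, if_neg (fun h => hy h.symm)]
      simp
    rw [tsum_eq_single x hz, aK_zero, if_pos rfl]
    simp only [ENNReal.ofReal_one, one_mul, w]
    apply ENNReal.ofReal_le_ofReal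
    simp
  | succ n ih =>
    have expand : ∀ y, ENNReal.ofReal (aK d (n+1) x y) * w lam y =
        ∑ i : Fin d, ((ENNReal.ofReal (aK d n (x + Pi.single i 1) y) * w lam y) +
          (ENNReal.ofReal (aK d n (x + -Pi.single i 1) y) * w lam y)) := by
      intro y
      rw [aK_succ,
        ENNReal.ofReal_sum_of_nonneg (fun i _ => add_nonneg (aK_nonneg _ _ _) (aK_nonneg _ _ _)),
        Finset.sum_mul]
      refine Finset.sum_congr rfl fun i _ => ?_
      rw [ENNReal.ofReal_add (aK_nonneg _ _ _) (aK_nonneg _ _ _), add_mul]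
    -- bound for each shifted starting point
    have hbound : ∀ x' : Fin d → ℤ, l1norm x' ≤ l1norm x + 1 →
        ∑' y : Fin d → ℤ, ENNReal.ofReal (aK d n x' y) * w lam y ≤
          ENNReal.ofReal ((2 * (d:ℝ)) ^ n * Real.exp (lam * ((l1norm x : ℝ) + (n+1)))) := by
      intro x' hx'
      refine (ih x').trans (ENNReal.ofReal_le_ofReal ?_)
      have h2d : (0:ℝ) ≤ (2 * (d:ℝ)) ^ n := by positivity
      refine mul_le_mul_of_nonneg_left ?_ h2d
      apply Real.exp_le_exp.2
      apply mul_le_mul_of_nonneg_left ?_ hlam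
      have : (l1norm x' : ℝ) ≤ (l1norm x : ℝ) + 1 := by exact_mod_cast hx'
      push_cast
      linarith
    calc ∑' y, ENNReal.ofReal (aK d (n+1) x y) * w lam y
        = ∑ i : Fin d, ∑' y : Fin d → ℤ,
            ((ENNReal.ofReal (aK d n (x + Pi.single i 1) y) * w lam y) +
             (ENNReal.ofReal (aK d n (x + -Pi.single i 1) y) * w lam y)) := by
          simp_rw [expand]
          exact Summable.tsum_finsetSum fun i _ => ENNReal.summable
      _ ≤ ∑ i : Fin d, ENNReal.ofReal
            (2 * ((2 * (d:ℝ)) ^ n * Real.exp (lam * ((l1norm x : ℝ) + (n+1))))) := by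
          refine Finset.sum_le_sum fun i _ => ?_
          rw [ENNReal.tsum_add]
          have e1 : l1norm (x + Pi.single i 1) ≤ l1norm x + 1 := by
            simpa using l1norm_add_single x i 1
          have e2 : l1norm (x + -Pi.single i 1) ≤ l1norm x + 1 := by
            have := l1norm_add_single x i (-1)
            simpa [Pi.single_neg] using this
          have := add_le_add (hbound _ e1) (hbound _ e2)
          refine this.trans (le_of_eq ?_)
          rw [← ENNReal.ofReal_add (by positivity) (by positivity)]
          congr 1
          ring
      _ ≤ ENNReal.ofReal ((2 * (d:ℝ)) ^ (n+1) * Real.exp (lam * ((l1norm x : ℝ) + (n+1)))) := by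
          rw [Finset.sum_const, Finset.card_univ, Fintype.card_fin, nsmul_eq_mul]
          rw [← ENNReal.ofReal_natCast d, ← ENNReal.ofReal_mul (by positivity)]
          apply ENNReal.ofReal_le_ofReal
          have : (d:ℝ) * (2 * ((2 * (d:ℝ)) ^ n * Real.exp (lam * ((l1norm x : ℝ) + (n+1))))) =
              (2 * (d:ℝ)) ^ (n+1) * Real.exp (lam * ((l1norm x : ℝ) + (n+1))) := by ring
          push_cast
          linarith [this.le]
      _ ≤ ENNReal.ofReal ((2 * (d:ℝ)) ^ (n+1) * Real.exp (lam * ((l1norm x : ℝ) + ((n:ℕ)+1 : ℕ)))) := by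
          apply le_of_eq
          congr 2
          push_cast
          ring

end HK

open HK in
/-- Hypothesis (H3) with `λ'(λ) = λ` (condition (4.3)) for simple symmetric random walk,
with explicit constant: `∑_y p_t(x,y) e^{λ|y|} ≤ exp(2dt(e^λ - 1)) e^{λ|x|}`. -/
theorem heatKernel_exp_moment {d : ℕ} (hd : 1 ≤ d) (lam : ℝ) (hlam : 0 < lam)
    (t : ℝ) (ht : 0 ≤ t) (x : Fin d → ℤ) :
    (Summable fun y : Fin d → ℤ =>
      heatKernel d t x y * Real.exp (lam * (l1norm y : ℝ))) ∧
      ∑' y : Fin d → ℤ, heatKernel d t x y * Real.exp (lam * (l1norm y : ℝ)) ≤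
        Real.exp (2 * d * t * (Real.exp lam - 1)) * Real.exp (lam * (l1norm x : ℝ)) := by
  classical
  set F : (Fin d → ℤ) → ℝ := fun y => heatKernel d t x y * Real.exp (lam * (l1norm y : ℝ)) with hF
  have hS : ∀ y, Summable (fun n : ℕ => ((n.factorial : ℝ))⁻¹ * t ^ n * aK d n x y) :=
    fun y => (heat_hasSum t x y).summable
  have hterm_nonneg : ∀ (y : Fin d → ℤ) (n : ℕ),
      0 ≤ ((n.factorial:ℝ))⁻¹ * t ^ n * aK d n x y := by
    intro y n
    have := aK_nonneg (d := d) n x y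
    positivity
  have hheat : ∀ y, heatKernel d t x y =
      Real.exp (-(2 * (d:ℝ) * t)) * ∑' n : ℕ, ((n.factorial:ℝ))⁻¹ * t ^ n * aK d n x y := by
    intro y
    rw [(heat_hasSum t x y).tsum_eq, ← mul_assoc, ← Real.exp_add, neg_add_cancel,
      Real.exp_zero, one_mul]
  -- pointwise ENNReal expansion
  have hofF : ∀ y, ENNReal.ofReal (F y) =
      ∑' n : ℕ, (ENNReal.ofReal (Real.exp (-(2 * (d:ℝ) * t))) *
        (ENNReal.ofReal (((n.factorial:ℝ))⁻¹ * t ^ n) *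
          (ENNReal.ofReal (aK d n x y) * w lam y))) := by
    intro y
    have hSnn : 0 ≤ ∑' n : ℕ, ((n.factorial:ℝ))⁻¹ * t ^ n * aK d n x y :=
      tsum_nonneg (hterm_nonneg y)
    rw [hF]
    simp only []
    rw [hheat y, mul_assoc, ENNReal.ofReal_mul (Real.exp_nonneg _),
      ENNReal.ofReal_mul hSnn,
      ENNReal.ofReal_tsum_of_nonneg (hterm_nonneg y) (hS y)]
    rw [← ENNReal.tsum_mul_right, ← ENNReal.tsum_mul_left]
    refine tsum_congr fun n => ?_
    rw [ENNReal.ofReal_mul (by positivity)]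
    rw [w]
    ring
  -- the global ENNReal bound
  set R : ℝ := Real.exp (2 * d * t * (Real.exp lam - 1)) * Real.exp (lam * (l1norm x : ℝ))
    with hR
  have hmain : ∑' y : Fin d → ℤ, ENNReal.ofReal (F y) ≤ ENNReal.ofReal R := by
    calc ∑' y : Fin d → ℤ, ENNReal.ofReal (F y)
        = ∑' (n : ℕ) (y : Fin d → ℤ), (ENNReal.ofReal (Real.exp (-(2 * (d:ℝ) * t))) *
            (ENNReal.ofReal (((n.factorial:ℝ))⁻¹ * t ^ n) *
              (ENNReal.ofReal (aK d n x y) * w lam y))) := by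
          simp_rw [hofF]
          exact ENNReal.tsum_comm
      _ = ∑' n : ℕ, (ENNReal.ofReal (Real.exp (-(2 * (d:ℝ) * t))) *
            (ENNReal.ofReal (((n.factorial:ℝ))⁻¹ * t ^ n) *
              (∑' y : Fin d → ℤ, ENNReal.ofReal (aK d n x y) * w lam y))) := by
          refine tsum_congr fun n => ?_
          rw [ENNReal.tsum_mul_left, ENNReal.tsum_mul_left]
      _ ≤ ∑' n : ℕ, (ENNReal.ofReal (Real.exp (-(2 * (d:ℝ) * t))) *
            (ENNReal.ofReal (((n.factorial:ℝ))⁻¹ * t ^ n) *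
              ENNReal.ofReal ((2 * (d:ℝ)) ^ n * Real.exp (lam * ((l1norm x : ℝ) + n))))) := by
          refine ENNReal.tsum_le_tsum fun n => ?_
          exact mul_le_mul_right (mul_le_mul_right (key lam hlam.le n x) _) _
      _ = ENNReal.ofReal (Real.exp (-(2 * (d:ℝ) * t))) * (ENNReal.ofReal (Real.exp (lam * (l1norm x : ℝ))) *
            ∑' n : ℕ, ENNReal.ofReal ((2 * (d:ℝ) * t * Real.exp lam) ^ n / n.factorial)) := by
          rw [← ENNReal.tsum_mul_left, ← ENNReal.tsum_mul_left]
          refine tsum_congr fun n => ?_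
          congr 1
          rw [← ENNReal.ofReal_mul (Real.exp_nonneg _),
            ← ENNReal.ofReal_mul (by positivity)]
          congr 1
          have hx : Real.exp (lam * ((l1norm x:ℝ) + n)) =
              Real.exp (lam * (l1norm x:ℝ)) * Real.exp lam ^ n := by
            rw [mul_add, Real.exp_add, mul_comm lam (n:ℝ), Real.exp_nat_mul]
          rw [hx, div_eq_mul_inv]
          ring
      _ ≤ ENNReal.ofReal R := by
          have hc : (0:ℝ) ≤ 2 * (d:ℝ) * t * Real.exp lam :=
            mul_nonneg (mul_nonneg (by positivity) ht) (Real.exp_nonneg _)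
          have hsum : ∑' n : ℕ, ENNReal.ofReal ((2 * (d:ℝ) * t * Real.exp lam) ^ n / n.factorial)
              = ENNReal.ofReal (Real.exp (2 * (d:ℝ) * t * Real.exp lam)) := by
            rw [← ENNReal.ofReal_tsum_of_nonneg
              (fun n => div_nonneg (pow_nonneg hc n) (by positivity))
              (Real.summable_pow_div_factorial _)]
            congr 1
            rw [Real.exp_eq_exp_ℝ, NormedSpace.exp_eq_tsum_div]
          rw [hsum, ← ENNReal.ofReal_mul (Real.exp_nonneg _),
            ← ENNReal.ofReal_mul (Real.exp_nonneg _)]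
          apply le_of_eq
          congr 1
          rw [hR, ← Real.exp_add, ← Real.exp_add, ← Real.exp_add]
          congr 1
          ring
  -- wrap up
  have hheat_nonneg : ∀ y, 0 ≤ heatKernel d t x y := by
    intro y
    rw [hheat y]
    exact mul_nonneg (Real.exp_nonneg _) (tsum_nonneg (hterm_nonneg y))
  have hFnn : ∀ y, 0 ≤ F y := fun y =>
    mul_nonneg (hheat_nonneg y) (Real.exp_nonneg _)
  have hRnn : 0 ≤ R := by rw [hR]; positivity
  have hne : (∑' y : Fin d → ℤ, ENNReal.ofReal (F y)) ≠ ⊤ :=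
    (lt_of_le_of_lt hmain ENNReal.ofReal_lt_top).ne
  have hsummable : Summable F :=
    (ENNReal.summable_toReal hne).congr fun y => ENNReal.toReal_ofReal (hFnn y)
  refine ⟨hsummable, ?_⟩
  have h1 : (∑' y : Fin d → ℤ, F y) = (∑' y : Fin d → ℤ, ENNReal.ofReal (F y)).toReal := by
    rw [ENNReal.tsum_toReal_eq (fun y => ENNReal.ofReal_ne_top)]
    exact tsum_congr fun y => (ENNReal.toReal_ofReal (hFnn y)).symm
  calc (∑' y : Fin d → ℤ, F y) = (∑' y : Fin d → ℤ, ENNReal.ofReal (F y)).toReal := h1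
    _ ≤ (ENNReal.ofReal R).toReal := ENNReal.toReal_mono ENNReal.ofReal_ne_top hmain
    _ = R := ENNReal.toReal_ofReal hRnn
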